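/- Let V be an inner product space decomposed as an orthogonal (internal) direct sum V = ⊕_{λ∈Λ} V(λ) of finite-dimensional subspaces. Let A ⊆ B ⊆ V be subspaces such that A = ⊕_λ (A ∩ V(λ)) and B = ⊕_λ (B ∩ V(λ)). If A is dense in B with respect to the inner product norm, then A = B. -/

import Mathlib

/-- Let `V` be a complex inner product space which is the orthogonal (internal) direct
sum of a family of pairwise orthogonal finite-dimensional subspaces `V λ`.  If
`A ⊆ B ⊆ V` are subspaces compatible with the grading, i.e. `A = ⨆ λ, A ⊓ V λ` and
`B = ⨆ λ, B ⊓ V λ`, and `A` is dense in `B` for the inner product norm, then `A = B`. -/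
theorem graded_dense_subspace_eq
    {V : Type*} [NormedAddCommGroup V] [InnerProductSpace ℂ V]
    {Λ : Type*} (Vf : Λ → Submodule ℂ V)
    (hfin : ∀ lam, FiniteDimensional ℂ (Vf lam))
    (horth : ∀ lam mu, lam ≠ mu → ∀ x ∈ Vf lam, ∀ y ∈ Vf mu, (inner ℂ x y : ℂ) = 0)
    (htotal : (⨆ lam, Vf lam) = ⊤)
    (A B : Submodule ℂ V) (hAB : A ≤ B)
    (hAgraded : A = ⨆ lam, A ⊓ Vf lam)
    (hBgraded : B = ⨆ lam, B ⊓ Vf lam)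
    (hdense : ∀ b ∈ B, ∀ ε : ℝ, 0 < ε → ∃ a ∈ A, ‖b - a‖ < ε) :
    A = B := by
  refine le_antisymm hAB ?_
  rw [hBgraded]
  refine iSup_le fun lam0 => ?_
  rintro b ⟨hbB, hbV⟩
  -- It suffices that b is in the closure of A ⊓ Vf lam0, which is closed.
  haveI := hfin lam0
  haveI : FiniteDimensional ℂ (A ⊓ Vf lam0 : Submodule ℂ V) :=
    Submodule.finiteDimensional_of_le inf_le_right
  have hclosed : IsClosed ((A ⊓ Vf lam0 : Submodule ℂ V) : Set V) :=
    Submodule.closed_of_finiteDimensional _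
  have hmem : b ∈ closure ((A ⊓ Vf lam0 : Submodule ℂ V) : Set V) := by
    rw [Metric.mem_closure_iff]
    intro ε hε
    obtain ⟨a, haA, ha⟩ := hdense b hbB ε hε
    -- decompose a along the grading of A
    have haA' : a ∈ ⨆ lam, A ⊓ Vf lam := hAgraded ▸ haA
    rw [Submodule.mem_iSup_iff_exists_finsupp] at haA'
    obtain ⟨f, hf, hfa⟩ := haA'
    refine ⟨f lam0, (hf lam0 : _), ?_⟩
    -- orthogonality: ⟪b - f lam0, a - f lam0⟫ = 0
    have hbV' : b - f lam0 ∈ Vf lam0 := sub_mem hbV (hf lam0).2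
    have horthkey : (inner ℂ (b - f lam0) (a - f lam0) : ℂ) = 0 := by
      rw [inner_sub_right]
      have : (inner ℂ (b - f lam0) a : ℂ) = inner ℂ (b - f lam0) (f lam0) := by
        rw [← hfa, Finsupp.sum, inner_sum]
        refine Finset.sum_eq_single lam0 (fun mu _ hmu => ?_) (fun h => ?_)
        · exact horth lam0 mu (Ne.symm hmu) _ hbV' _ (hf mu).2
        · rw [Finsupp.notMem_support_iff.mp h, inner_zero_right]
      rw [this, sub_self]
    have hpyth : ‖b - a‖ ^ 2 = ‖b - f lam0‖ ^ 2 + ‖f lam0 - a‖ ^ 2 := by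
      have : b - a = (b - f lam0) + (f lam0 - a) := by abel
      rw [this, ← sq_abs, ← sq_abs ‖b - f lam0‖, ← sq_abs ‖f lam0 - a‖]
      simp only [sq, abs_norm]
      apply norm_add_sq_eq_norm_sq_add_norm_sq_of_inner_eq_zero (𝕜 := ℂ)
      have h2 : f lam0 - a = -(a - f lam0) := by abel
      rw [h2, inner_neg_right, horthkey, neg_zero]
    have h1 : ‖b - f lam0‖ ≤ ‖b - a‖ := by
      nlinarith [norm_nonneg (b - f lam0), norm_nonneg (b - a), sq_nonneg ‖f lam0 - a‖]
    rw [dist_eq_norm]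
    exact lt_of_le_of_lt h1 ha
  rw [hclosed.closure_eq] at hmem
  exact hmem.1
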